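/- Let x_k ∈ ℝⁿ, let H_k = B_k + (c + μ₁·min{1, ‖G(x_k)‖^δ})·I where B_k is symmetric positive semidefinite, c > 0, μ₁ ∈ (0,1], μ₂ ∈ (0, μ₁], δ ∈ [0,1], let l_k(x) = f(x_k) + ⟨∇f(x_k), x − x_k⟩ + g(x), and let x̂_k be the minimizer of x ↦ l_k(x) + (1/2)⟨x − x_k, H_k(x − x_k)⟩ + ⟨ε_k, x − x_k⟩ with ‖ε_k‖ ≤ (μ₂/2)·min{1, ‖G(x_k)‖^δ}·‖x̂_k − x_k‖. Then l_k(x_k) − l_k(x̂_k) ≥ (c/2)·‖x̂_k − x_k‖². -/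
import Mathlib


open scoped RealInnerProductSpace

/-- The model decrease `l_k(x_k) − l_k(x̂_k) ≥ (c/2)·‖x̂_k − x_k‖²`. -/
theorem stmt4 {n : ℕ}
    (f g : EuclideanSpace ℝ (Fin n) → ℝ)
    (hf : ContDiff ℝ 1 f)
    (hg : ConvexOn ℝ Set.univ g) (hgc : Continuous g)
    (proxg : EuclideanSpace ℝ (Fin n) → EuclideanSpace ℝ (Fin n))
    (hprox : ∀ x, IsMinOn (fun u => g u + (1 / 2) * ‖u - x‖ ^ 2) Set.univ (proxg x))
    (hproxU : ∀ x u, IsMinOn (fun u => g u + (1 / 2) * ‖u - x‖ ^ 2) Set.univ u → u = proxg x)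
    (G : EuclideanSpace ℝ (Fin n) → EuclideanSpace ℝ (Fin n))
    (hG : ∀ x, G x = x - proxg (x - gradient f x))
    (xk : EuclideanSpace ℝ (Fin n)) (B : EuclideanSpace ℝ (Fin n) →L[ℝ] EuclideanSpace ℝ (Fin n))
    (hBsym : ∀ u v, ⟪B u, v⟫ = ⟪u, B v⟫)
    (hBpsd : ∀ v, 0 ≤ ⟪v, B v⟫)
    (c μ₁ μ₂ δ : ℝ) (hc : 0 < c)
    (hμ₁ : μ₁ ∈ Set.Ioc (0 : ℝ) 1) (hμ₂ : μ₂ ∈ Set.Ioc (0 : ℝ) μ₁)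
    (hδ : δ ∈ Set.Icc (0 : ℝ) 1)
    (H : EuclideanSpace ℝ (Fin n) →L[ℝ] EuclideanSpace ℝ (Fin n))
    (hH : H = B + (c + μ₁ * min 1 (‖G xk‖ ^ δ)) • ContinuousLinearMap.id ℝ (EuclideanSpace ℝ (Fin n)))
    (lk : EuclideanSpace ℝ (Fin n) → ℝ)
    (hlk : ∀ x, lk x = f xk + ⟪gradient f xk, x - xk⟫ + g x)
    (εk xhat : EuclideanSpace ℝ (Fin n))
    (hmin : IsMinOn (fun x => lk x + (1 / 2) * ⟪x - xk, H (x - xk)⟫ + ⟪εk, x - xk⟫)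
        Set.univ xhat)
    (herr : ‖εk‖ ≤ (μ₂ / 2) * min 1 (‖G xk‖ ^ δ) * ‖xhat - xk‖) :
    lk xk - lk xhat ≥ (c / 2) * ‖xhat - xk‖ ^ 2 := by

  set d := xhat - xk with hd
  set m := min 1 (‖G xk‖ ^ δ) with hm
  have hm0 : 0 ≤ m := le_min zero_le_one (Real.rpow_nonneg (norm_nonneg _) δ)
  have h1 : lk xhat + (1 / 2) * ⟪d, H d⟫ + ⟪εk, d⟫ ≤ lk xk := by
    have h := hmin (Set.mem_univ xk)
    simp only [Set.mem_setOf_eq, sub_self, map_zero, inner_zero_right, mul_zero, add_zero] at h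
    exact h
  have hHd : ⟪d, H d⟫ = ⟪d, B d⟫ + (c + μ₁ * m) * ‖d‖ ^ 2 := by
    rw [hH]
    simp only [ContinuousLinearMap.add_apply, ContinuousLinearMap.coe_smul',
      Pi.smul_apply, ContinuousLinearMap.coe_id', id_eq, inner_add_right,
      real_inner_smul_right, real_inner_self_eq_norm_sq]

  have hB : 0 ≤ ⟪d, B d⟫ := hBpsd d
  have hcs : ⟪εk, d⟫ ≥ -((μ₂ / 2) * m * ‖d‖ * ‖d‖) := by
    have h2 : |⟪εk, d⟫| ≤ ‖εk‖ * ‖d‖ := abs_real_inner_le_norm εk d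
    have h3 : ‖εk‖ * ‖d‖ ≤ (μ₂ / 2) * m * ‖d‖ * ‖d‖ :=
      mul_le_mul_of_nonneg_right herr (norm_nonneg d)
    have := neg_abs_le ⟪εk, d⟫
    linarith
  have hsq : ‖d‖ * ‖d‖ = ‖d‖ ^ 2 := (sq ‖d‖).symm
  have hμ : (μ₂ / 2) * m * ‖d‖ * ‖d‖ ≤ (μ₁ / 2) * m * ‖d‖ ^ 2 := by
    have h4 : 0 ≤ (μ₁ - μ₂) / 2 * (m * ‖d‖ ^ 2) :=
      mul_nonneg (by linarith [hμ₂.2]) (mul_nonneg hm0 (sq_nonneg _))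
    nlinarith
  nlinarith [sq_nonneg ‖d‖]
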